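/- The full group G = S_h × S_n × Ω is regular if and only if S_h × S_n × {id} is regular, if and only if gcd(h, n!) = 1. -/

import Mathlib

/-- A preference profile: each individual `i : Fin h` has a linear order on the `n`
alternatives, identified with the permutation of `Fin n` mapping ranks to alternatives. -/
abbrev Profile (h n : Nat) := Fin h → Equiv.Perm (Fin n)

/-- The order-reversing permutation `ρ₀`. -/
def rho0 (n : Nat) : Equiv.Perm (Fin n) := Fin.revPerm

/-- The subgroup `Ω = {id, ρ₀}` of `S_n` (generated by `ρ₀`, which has order 2). -/
def Omega (n : Nat) : Subgroup (Equiv.Perm (Fin n)) := Subgroup.zpowers (rho0 n)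

/-- `ρ₀` as an element of `Ω`. -/
def omegaRho0 (n : Nat) : Omega n := ⟨rho0 n, Subgroup.mem_zpowers _⟩

/-- The group `G = S_h × S_n × Ω`. -/
abbrev GG (h n : Nat) := Equiv.Perm (Fin h) × Equiv.Perm (Fin n) × (Omega n)

/-- The action of `(φ, ψ, ρ) ∈ G` on a profile: `(p^{(φ,ψ,ρ)})_i = ψ p_{φ⁻¹(i)} ρ`. -/
def act {h n : Nat} (g : GG h n) (p : Profile h n) : Profile h n :=
  fun i => g.2.1 * p (g.1⁻¹ i) * (g.2.2 : Equiv.Perm (Fin n))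

/-- A rule `F` is `U`-symmetric if `F(p^{(φ,ψ,ρ)}) = ψ F(p) ρ` for all `p` and `(φ,ψ,ρ) ∈ U`. -/
def USymm {h n : Nat} (U : Set (GG h n)) (F : Profile h n → Equiv.Perm (Fin n)) : Prop :=
  ∀ p : Profile h n, ∀ g ∈ U, F (act g p) = g.2.1 * F p * (g.2.2 : Equiv.Perm (Fin n))

/-- `S₁^U(p) = { q : ψ q ρ = q for all (φ,ψ,ρ) in the stabilizer of p in U }`. -/
def S1set {h n : Nat} (U : Set (GG h n)) (p : Profile h n) : Set (Equiv.Perm (Fin n)) :=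
  {q | ∀ g ∈ U, act g p = p → g.2.1 * q * (g.2.2 : Equiv.Perm (Fin n)) = q}

/-- Regularity of `U`: for every profile `p` there is `ψ*` conjugate to `ρ₀` with
`Stab_U(p) ⊆ (S_h × {id} × {id}) ∪ (S_h × {ψ*} × {ρ₀})`. -/
def Regular {h n : Nat} (U : Set (GG h n)) : Prop :=
  ∀ p : Profile h n, ∃ ψs : Equiv.Perm (Fin n), IsConj (rho0 n) ψs ∧
    ∀ g ∈ U, act g p = p →
      (g.2.1 = 1 ∧ (g.2.2 : Equiv.Perm (Fin n)) = 1) ∨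
      (g.2.1 = ψs ∧ (g.2.2 : Equiv.Perm (Fin n)) = rho0 n)

/-- Number of individuals strictly preferring `x` to `y` in profile `p`
(smaller rank = better, since permutations send ranks to alternatives). -/
def prefCount {h n : Nat} (p : Profile h n) (x y : Fin n) : Nat :=
  (Finset.univ.filter fun i => (p i)⁻¹ x < (p i)⁻¹ y).card

/-- `C_ν(p)`: linear orders consistent with the `ν`-majority principle applied to `p`. -/
def Cset {h n : Nat} (p : Profile h n) (ν : Nat) : Set (Equiv.Perm (Fin n)) :=
  {q | ∀ x y : Fin n, ν ≤ prefCount p x y → q⁻¹ x < q⁻¹ y}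

/-- `ν(p)`: the minimal majority threshold `ν ∈ ℕ ∩ (h/2, h]` with `C_ν(p) ≠ ∅`. -/
noncomputable def nuMin {h n : Nat} (p : Profile h n) : Nat :=
  sInf {ν : Nat | h < 2 * ν ∧ ν ≤ h ∧ (Cset p ν).Nonempty}

/-- minimal majority rule. -/
def MinMaj {h n : Nat} (F : Profile h n → Equiv.Perm (Fin n)) : Prop :=
  ∀ p : Profile h n, F p ∈ Cset p (nuMin p)

/-- `gcd(T(φ))`: the gcd of the lengths of the orbits (cycles) of `φ`. -/
noncomputable def gcdOrbits {h : Nat} (phi : Equiv.Perm (Fin h)) : Nat :=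
  Finset.univ.gcd fun i => Function.minimalPeriod (⇑phi) i

section Aux

open Equiv Function

-- basic facts about rho0 / Omega
lemma rho0_sq (n : ℕ) : rho0 n * rho0 n = 1 := by
  ext i
  simp [rho0, Equiv.Perm.mul_apply, Fin.rev_rev]

lemma rho0_inv (n : ℕ) : (rho0 n)⁻¹ = rho0 n :=
  inv_eq_of_mul_eq_one_right (rho0_sq n)

lemma rho0_ne_one {n : ℕ} (hn : 2 ≤ n) : rho0 n ≠ 1 := by
  intro hc
  have := Equiv.ext_iff.mp hc ⟨0, by omega⟩
  rw [Fin.ext_iff] at this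
  simp only [rho0, Fin.revPerm_apply, Fin.rev, Equiv.Perm.one_apply] at this
  omega

lemma omega_cases {n : ℕ} (ρ : Omega n) :
    (ρ : Equiv.Perm (Fin n)) = 1 ∨ (ρ : Equiv.Perm (Fin n)) = rho0 n := by
  obtain ⟨x, hx⟩ := ρ
  obtain ⟨k, hk⟩ := Subgroup.mem_zpowers_iff.mp hx
  have h2 : (rho0 n) ^ (2 : ℤ) = 1 := by
    rw [zpow_two]; exact rho0_sq n
  rcases Int.even_or_odd k with ⟨m, hm⟩ | ⟨m, hm⟩
  · left
    show x = 1
    rw [← hk, hm, ← two_mul, zpow_mul, h2, one_zpow]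
  · right
    show x = rho0 n
    rw [← hk, hm, zpow_add, zpow_mul, h2, one_zpow, one_mul, zpow_one]

lemma omega_comm {n : ℕ} (ρ ρ' : Omega n) :
    (ρ : Equiv.Perm (Fin n)) * (ρ' : Equiv.Perm (Fin n))
      = (ρ' : Equiv.Perm (Fin n)) * (ρ : Equiv.Perm (Fin n)) := by
  rcases omega_cases ρ with h | h <;> rcases omega_cases ρ' with h' | h' <;>
    simp [h, h']

-- multiplicativity of act
lemma act_mul {h n : ℕ} (g g' : GG h n) (p : Profile h n) :
    act (g * g') p = act g (act g' p) := by
  funext i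
  simp only [act, Prod.fst_mul, Prod.snd_mul, Subgroup.coe_mul, mul_inv_rev,
    Equiv.Perm.mul_apply]
  rw [omega_comm g.2.2 g'.2.2]
  group

-- divisibility of h by common divisor of orbit lengths
lemma dvd_card_of_dvd_periods {h : ℕ} (φ : Equiv.Perm (Fin h)) (d : ℕ)
    (hd : ∀ j : Fin h, d ∣ Function.minimalPeriod (fun x => φ • x) j) : d ∣ h := by
  classical
  have hpos : ∀ j : Fin h, 0 < Function.minimalPeriod (fun x => φ • x) j := by
    intro j
    apply IsPeriodicPt.minimalPeriod_pos (orderOf_pos φ)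
    show IsPeriodicPt (fun x => φ • x) (orderOf φ) j
    unfold IsPeriodicPt IsFixedPt
    rw [smul_iterate]
    simp [pow_orderOf_eq_one]
  have e := (MulAction.selfEquivSigmaOrbits (Subgroup.zpowers φ) (Fin h)).trans
    (Equiv.sigmaCongrRight fun q => MulAction.orbitZPowersEquiv φ q.out)
  have hcard := Fintype.card_congr e
  rw [Fintype.card_fin, Fintype.card_sigma] at hcard
  rw [hcard]
  apply Finset.dvd_sum
  intro q _
  haveI : NeZero (Function.minimalPeriod (fun x => φ • x) q.out) := ⟨(hpos _).ne'⟩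
  rw [ZMod.card]
  exact hd _

-- key lemma: stabilizer elements with trivial Omega part have trivial S_n part
lemma psi_eq_one {h n : ℕ} (hgcd : Nat.gcd h (n.factorial) = 1)
    (p : Profile h n) (φ : Equiv.Perm (Fin h)) (ψ : Equiv.Perm (Fin n))
    (hst : ∀ j : Fin h, p (φ j) = ψ * p j) : ψ = 1 := by
  have key : ∀ (k : ℕ) (j : Fin h), p (φ ^ k • j) = ψ ^ k * p j := by
    intro k
    induction k with
    | zero => intro j; simp
    | succ k ih =>
      intro j
      rw [pow_succ' φ, pow_succ' ψ, mul_smul]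
      have : φ • (φ ^ k • j) = φ (φ ^ k • j) := rfl
      rw [this, hst, ih, mul_assoc]
  have hd : ∀ j : Fin h, orderOf ψ ∣ Function.minimalPeriod (fun x => φ • x) j := by
    intro j
    set ℓ := Function.minimalPeriod (fun x => φ • x) j with hℓ
    have hper : φ ^ ℓ • j = j := by
      have := isPeriodicPt_minimalPeriod (fun x => φ • x) j
      unfold IsPeriodicPt IsFixedPt at this
      rw [smul_iterate] at this
      exact this
    have := key ℓ j
    rw [hper] at this
    have hψ : ψ ^ ℓ = 1 := by
      have h' : ψ ^ ℓ * p j = 1 * p j := by rw [one_mul, ← this]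
      exact mul_right_cancel h'
    exact orderOf_dvd_of_pow_eq_one hψ
  have h1 : orderOf ψ ∣ h := dvd_card_of_dvd_periods φ _ hd
  have h2 : orderOf ψ ∣ n.factorial := by
    have := orderOf_dvd_card (x := ψ)
    rwa [Fintype.card_perm, Fintype.card_fin] at this
  have := Nat.dvd_gcd h1 h2
  rw [hgcd, Nat.dvd_one] at this
  exact orderOf_eq_one_iff.mp this

-- a stabilizer element of U1 form has trivial psi
lemma stab_psi_one {h n : ℕ} (hgcd : Nat.gcd h (n.factorial) = 1)
    (p : Profile h n) (g : GG h n) (hst : act g p = p)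
    (hρ : (g.2.2 : Equiv.Perm (Fin n)) = 1) : g.2.1 = 1 := by
  apply psi_eq_one hgcd p g.1 g.2.1
  intro j
  have := congrFun hst (g.1 j)
  simp only [act, hρ, mul_one, Equiv.Perm.inv_def, Equiv.symm_apply_apply] at this
  exact this.symm

lemma regular_mono {h n : ℕ} {U V : Set (GG h n)} (hUV : U ⊆ V) :
    Regular V → Regular U := by
  intro hr p
  obtain ⟨ψs, h1, h2⟩ := hr p
  exact ⟨ψs, h1, fun g hg => h2 g (hUV hg)⟩

-- helper: build stabilizer condition without inverses
lemma act_one_eq {h n : ℕ} (φ : Equiv.Perm (Fin h)) (ψ : Equiv.Perm (Fin n))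
    (p : Profile h n) (hst : ∀ j, p (φ j) = ψ * p j) :
    act (φ, ψ, (1 : Omega n)) p = p := by
  funext i
  show ψ * p (φ⁻¹ i) * ((1 : Omega n) : Equiv.Perm (Fin n)) = p i
  rw [OneMemClass.coe_one, mul_one, ← hst (φ⁻¹ i), Equiv.Perm.inv_def, Equiv.apply_symm_apply]

-- gcd ≠ 1 gives a counterexample profile
lemma gcd_of_regular {h n : ℕ} (hh : 2 ≤ h) (hn : 2 ≤ n)
    (hr : Regular {g : GG h n | (g.2.2 : Equiv.Perm (Fin n)) = 1}) :
    Nat.gcd h n.factorial = 1 := by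
  by_contra hne
  obtain ⟨q, hq, hqdvd⟩ := Nat.exists_prime_and_dvd hne
  have hqh : q ∣ h := hqdvd.trans (Nat.gcd_dvd_left _ _)
  haveI : Fact q.Prime := ⟨hq⟩
  obtain ⟨ψ, hψ⟩ := exists_prime_orderOf_dvd_card (G := Equiv.Perm (Fin n)) q
    (by rw [Fintype.card_perm, Fintype.card_fin]; exact hqdvd.trans (Nat.gcd_dvd_right _ _))
  have hq2 := hq.two_le
  obtain ⟨qq, rfl⟩ : ∃ qq, q = qq + 1 := ⟨q - 1, by omega⟩
  set q := qq + 1 with hqdef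
  set m := h / q with hmdef
  have hm : m * q = h := Nat.div_mul_cancel hqh
  let e : Fin m × Fin q ≃ Fin h := finProdFinEquiv.trans (finCongr hm)
  let σ : Equiv.Perm (Fin m × Fin q) :=
    Equiv.prodCongr (Equiv.refl (Fin m)) (finRotate q)
  let φ : Equiv.Perm (Fin h) := e.permCongr σ
  let p : Profile h n := fun i => ψ ^ ((e.symm i).2 : ℕ)
  have key : ∀ j, p (φ j) = ψ * p j := by
    intro j
    show ψ ^ ((e.symm (φ j)).2 : ℕ) = ψ * ψ ^ ((e.symm j).2 : ℕ)
    have h1 : e.symm (φ j) = σ (e.symm j) := by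
      show e.symm (e.permCongr σ j) = σ (e.symm j)
      rw [Equiv.permCongr_apply, Equiv.symm_apply_apply]
    rw [h1]
    have h2 : (σ (e.symm j)).2 = finRotate q (e.symm j).2 := rfl
    rw [h2]
    set b : Fin q := (e.symm j).2 with hbdef
    have h3 : ((finRotate q b : Fin q) : ℕ) = ((b : ℕ) + 1) % q := by
      rw [finRotate_succ_apply, Fin.val_add_one]
      split_ifs with hb
      · rw [hb, Fin.val_last, Nat.mod_self]
      · have hne' : (b : ℕ) ≠ qq := fun hc => hb (Fin.ext (by rw [hc, Fin.val_last]))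
        have hlt : (b : ℕ) < q := b.isLt
        rw [Nat.mod_eq_of_lt (by omega)]
    rw [h3]
    have h4 : ((b : ℕ) + 1) % q = ((b : ℕ) + 1) % orderOf ψ := by rw [hψ]
    rw [h4, pow_mod_orderOf, pow_succ']
  have hstab := act_one_eq φ ψ p key
  obtain ⟨ψs, hconj, hmain⟩ := hr p
  have hg1 : (φ, ψ, (1 : Omega n)) ∈ {g : GG h n | (g.2.2 : Equiv.Perm (Fin n)) = 1} := by
    simp [Set.mem_setOf_eq]
  rcases hmain _ hg1 hstab with ⟨hψ1, _⟩ | ⟨_, hρ1⟩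
  · have : orderOf ψ = 1 := by rw [show ψ = 1 from hψ1, orderOf_one]
    rw [hψ] at this
    exact hq.one_lt.ne' this
  · have : rho0 n = 1 := by
      rw [← hρ1]
      simp
    exact rho0_ne_one hn this

-- main direction: gcd = 1 implies full regularity
lemma regular_univ_of_gcd {h n : ℕ} (hn : 2 ≤ n)
    (hg : Nat.gcd h n.factorial = 1) : Regular (Set.univ : Set (GG h n)) := by
  intro p
  by_cases hex : ∃ g0 : GG h n, act g0 p = p ∧ ((g0.2.2 : Equiv.Perm (Fin n)) = rho0 n)
  case neg =>
    refine ⟨rho0 n, IsConj.refl _, ?_⟩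
    intro g _ hst
    rcases omega_cases g.2.2 with hρ | hρ
    · exact Or.inl ⟨stab_psi_one hg p g hst hρ, hρ⟩
    · exact absurd ⟨g, hst, hρ⟩ hex
  case pos =>
    obtain ⟨g0, hst0, hρ0⟩ := hex
    -- ψ0 is an involution
    have hsq : act (g0 * g0) p = p := by rw [act_mul, hst0, hst0]
    have hρsq : ((g0 * g0).2.2 : Equiv.Perm (Fin n)) = 1 := by
      show ((g0.2.2 * g0.2.2 : Omega n) : Equiv.Perm (Fin n)) = 1
      rw [Subgroup.coe_mul, hρ0, rho0_sq]
    have hψsq : g0.2.1 * g0.2.1 = 1 := by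
      have := stab_psi_one hg p (g0 * g0) hsq hρsq
      rw [show (g0 * g0).2.1 = g0.2.1 * g0.2.1 from rfl] at this
      exact this
    -- there is an odd orbit of φ0
    have h2fac : (2 : ℕ) ∣ n.factorial := Nat.dvd_factorial (by omega) hn
    have hodd : ¬ (2 ∣ h) := by
      intro h2h
      have := Nat.dvd_gcd h2h h2fac
      rw [hg] at this
      omega
    obtain ⟨j, hj⟩ : ∃ j : Fin h, ¬ (2 ∣ Function.minimalPeriod (fun x => g0.1 • x) j) := by
      by_contra hcon
      push_neg at hcon
      exact hodd (dvd_card_of_dvd_periods g0.1 2 hcon)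
    -- iterate the stabilizer identity
    have hstep : ∀ i : Fin h, p (g0.1 i) = g0.2.1 * p i * rho0 n := by
      intro i
      have := congrFun hst0 (g0.1 i)
      simp only [act, hρ0, Equiv.Perm.inv_def, Equiv.symm_apply_apply] at this
      exact this.symm
    have key : ∀ k : ℕ, p (g0.1 ^ k • j) = g0.2.1 ^ k * p j * (rho0 n) ^ k := by
      intro k
      induction k with
      | zero => simp
      | succ k ih =>
        rw [pow_succ' g0.1, mul_smul]
        have hs : g0.1 • (g0.1 ^ k • j) = g0.1 (g0.1 ^ k • j) := rfl
        rw [hs, hstep, ih, pow_succ' g0.2.1, pow_succ (rho0 n)]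
        simp only [mul_assoc]
    set ℓ := Function.minimalPeriod (fun x => g0.1 • x) j with hℓ
    have hper : g0.1 ^ ℓ • j = j := by
      have := isPeriodicPt_minimalPeriod (fun x => g0.1 • x) j
      unfold IsPeriodicPt IsFixedPt at this
      rw [smul_iterate] at this
      exact this
    obtain ⟨t, ht⟩ : ∃ t, ℓ = 2 * t + 1 := ⟨ℓ / 2, by omega⟩
    have hψl : g0.2.1 ^ ℓ = g0.2.1 := by
      rw [ht, pow_succ, pow_mul, pow_two, hψsq, one_pow, one_mul]
    have hρl : (rho0 n) ^ ℓ = rho0 n := by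
      rw [ht, pow_succ, pow_mul, pow_two, rho0_sq, one_pow, one_mul]
    have e1 : p j = g0.2.1 * p j * rho0 n := by
      have := key ℓ
      rw [hper, hψl, hρl] at this
      exact this
    have hconj : IsConj (rho0 n) g0.2.1 := by
      rw [isConj_iff]
      refine ⟨p j, ?_⟩
      have h1 : p j * rho0 n = g0.2.1 * p j := by
        conv_lhs => rw [e1]
        rw [mul_assoc, rho0_sq, mul_one]
      rw [h1, mul_assoc, mul_inv_cancel, mul_one]
    refine ⟨g0.2.1, hconj, ?_⟩
    intro g _ hst
    rcases omega_cases g.2.2 with hρ | hρ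
    · exact Or.inl ⟨stab_psi_one hg p g hst hρ, hρ⟩
    · refine Or.inr ⟨?_, hρ⟩
      have hstm : act (g * g0⁻¹) p = p := by
        have h2 : act (g * g0⁻¹) p = act (g * g0⁻¹) (act g0 p) := by rw [hst0]
        rw [h2, ← act_mul, inv_mul_cancel_right]
        exact hst
      have hρm : ((g * g0⁻¹).2.2 : Equiv.Perm (Fin n)) = 1 := by
        show ((g.2.2 * (g0.2.2)⁻¹ : Omega n) : Equiv.Perm (Fin n)) = 1
        rw [Subgroup.coe_mul, InvMemClass.coe_inv, hρ, hρ0, rho0_inv, rho0_sq]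
      have := stab_psi_one hg p _ hstm hρm
      rw [show (g * g0⁻¹).2.1 = g.2.1 * (g0.2.1)⁻¹ from rfl] at this
      exact mul_inv_eq_one.mp this


end Aux

open Equiv Function

theorem stmt15 {h n : Nat} (hh : 2 ≤ h) (hn : 2 ≤ n) :
    (Regular (Set.univ : Set (GG h n)) ↔
      Regular {g : GG h n | (g.2.2 : Equiv.Perm (Fin n)) = 1}) ∧
    (Regular (Set.univ : Set (GG h n)) ↔ Nat.gcd h n.factorial = 1) := by
  have hA : Regular (Set.univ : Set (GG h n)) →
      Regular {g : GG h n | (g.2.2 : Equiv.Perm (Fin n)) = 1} :=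
    regular_mono (Set.subset_univ _)
  constructor
  · exact ⟨fun hr => hA hr, fun hr => regular_univ_of_gcd hn (gcd_of_regular hh hn hr)⟩
  · exact ⟨fun hr => gcd_of_regular hh hn (hA hr), regular_univ_of_gcd hn⟩
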